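/- If a product of standard simplices P = Δ^{n_1} × ⋯ × Δ^{n_m} is viewed as an ordered simplicial set, then for any necklace T, any simplicial map T → P extends uniquely to a map Δ[T] → P, where Δ[T] is the simplex on the ordered vertex set of T. -/

import Mathlib

open CategoryTheory Simplicial

namespace Paper

/-- The directed-edge relation on vertices of a simplicial set. -/
def edgeRel (X : SSet) (x y : X _⦋0⦌) : Prop :=
  ∃ e : X _⦋1⦌, X.δ 1 e = x ∧ X.δ 0 e = y

/-- `x ⪯ y` iff there is a finite directed path of 1-simplices from `x` to `y`. -/
def vertPath (X : SSet) : X _⦋0⦌ → X _⦋0⦌ → Prop :=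
  Relation.ReflTransGen (edgeRel X)

/-- The sequence of vertices of an `n`-simplex. -/
def vertexSeq {X : SSet} {n : ℕ} (x : X _⦋n⦌) : Fin (n + 1) → X _⦋0⦌ :=
  fun i => X.map (SimplexCategory.const (⦋0⦌ : SimplexCategory) ⦋n⦌ i).op x

/-- A simplicial set is *ordered* if the path preorder on its vertices is
antisymmetric and every simplex is determined by its sequence of vertices. -/
def Ordered (X : SSet) : Prop :=
  (∀ x y : X _⦋0⦌, vertPath X x y → vertPath X y x → x = y) ∧
  (∀ (n : ℕ) (x y : X _⦋n⦌), vertexSeq x = vertexSeq y → x = y)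

/-- A hands-on model of the standard `n`-simplex. -/
def Δstd (n : ℕ) : SSet where
  obj m := Fin (m.unop.len + 1) →o Fin (n + 1)
  map φ := TypeCat.ofHom fun f => f.comp φ.unop.toOrderHom
  map_id _ := rfl
  map_comp _ _ := rfl

/-- The condition cutting a necklace with joint set `J` out of `Δstd N`:
no joint lies strictly between the first and last vertex of the simplex. -/
def NeckCond {N : ℕ} (J : Finset (Fin (N + 1))) {m : SimplexCategoryᵒᵖ}
    (f : Fin (m.unop.len + 1) →o Fin (N + 1)) : Prop :=
  ∀ t ∈ J, ¬ (f 0 < t ∧ t < f (Fin.last m.unop.len))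

/-- The necklace with vertices `0,…,N` and joints `J` (a wedge of simplices glued
end to end; the beads span the intervals between consecutive joints). -/
def Necklace (N : ℕ) (J : Finset (Fin (N + 1))) : SSet where
  obj m := { f : Fin (m.unop.len + 1) →o Fin (N + 1) // NeckCond J f }
  map φ := TypeCat.ofHom fun f => ⟨f.1.comp φ.unop.toOrderHom, by
    intro t ht h
    exact f.2 t ht ⟨lt_of_le_of_lt (f.1.monotone (Fin.zero_le _)) h.1,
      lt_of_lt_of_le h.2 (f.1.monotone (Fin.le_last _))⟩⟩
  map_id _ := rfl
  map_comp _ _ := rfl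

/-- The vertex `v` of a necklace. -/
def vtx {N : ℕ} (J : Finset (Fin (N + 1))) (v : Fin (N + 1)) : (Necklace N J) _⦋0⦌ :=
  ⟨⟨fun _ => v, fun _ _ _ => le_rfl⟩, fun _ _ h => absurd (h.1.trans h.2) (lt_irrefl v)⟩

/-- The canonical inclusion of a necklace into the simplex on its vertices. -/
def neckIncl (N : ℕ) (J : Finset (Fin (N + 1))) : Necklace N J ⟶ Δstd N where
  app _ := TypeCat.ofHom fun f => f.1
  naturality _ _ _ := rfl

lemma eq_vtx {N : ℕ} {J : Finset (Fin (N + 1))} (x : (Necklace N J) _⦋0⦌) :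
    x = vtx J (x.1 0) := by
  refine Subtype.ext (OrderHom.ext _ _ (funext fun i => ?_))
  have : i = 0 := Subsingleton.elim (α := Fin 1) i 0
  rw [this]; rfl

/-- The map induced on vertices by a map of necklaces. -/
def nvmap {N N' : ℕ} {J : Finset (Fin (N + 1))} {J' : Finset (Fin (N' + 1))}
    (g : Necklace N J ⟶ Necklace N' J') : Fin (N + 1) → Fin (N' + 1) :=
  fun v => (g.app (Opposite.op (⦋0⦌ : SimplexCategory)) (vtx J v)).1 0

lemma app_vtx {N N' : ℕ} {J : Finset (Fin (N + 1))} {J' : Finset (Fin (N' + 1))}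
    (g : Necklace N J ⟶ Necklace N' J') (v : Fin (N + 1)) :
    g.app (Opposite.op (⦋0⦌ : SimplexCategory)) (vtx J v) = vtx J' (nvmap g v) :=
  eq_vtx _

lemma nvmap_comp {N N' N'' : ℕ} {J : Finset (Fin (N + 1))} {J' : Finset (Fin (N' + 1))}
    {J'' : Finset (Fin (N'' + 1))} (g : Necklace N J ⟶ Necklace N' J')
    (h : Necklace N' J' ⟶ Necklace N'' J'') :
    nvmap (g ≫ h) = nvmap h ∘ nvmap g := by
  funext v
  show (h.app _ (g.app _ (vtx J v))).1 0 = _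
  rw [app_vtx g v]
  rfl

/-- A map of simplicial sets is a *simple inclusion* if it has the right lifting
property with respect to the endpoint inclusions `∂Δ¹ ↪ T` for every necklace `T`. -/
def IsSimpleInclusion {A X : SSet} (i : A ⟶ X) : Prop :=
  ∀ (N : ℕ) (J : Finset (Fin (N + 1))), (0 : Fin (N + 1)) ∈ J → Fin.last N ∈ J →
    ∀ (v : Necklace N J ⟶ X) (a b : A _⦋0⦌),
      i.app _ a = v.app _ (vtx J 0) → i.app _ b = v.app _ (vtx J (Fin.last N)) →
      ∃ l : Necklace N J ⟶ A, l ≫ i = v ∧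
        l.app _ (vtx J 0) = a ∧ l.app _ (vtx J (Fin.last N)) = b

def Pstd (m : ℕ) (n : Fin m → ℕ) : SSet where
  obj k := ∀ i : Fin m, Fin (k.unop.len + 1) →o Fin (n i + 1)
  map φ := TypeCat.ofHom fun f => fun i => (f i).comp φ.unop.toOrderHom
  map_id _ := rfl
  map_comp _ _ := rfl

/-- A simplex of a simplicial set is nondegenerate if it is not the image of a
lower-dimensional simplex under a degeneracy operator. -/
def IsNondeg {X : SSet} {n : ℕ} (x : X _⦋n⦌) : Prop :=
  ∀ (m : ℕ) (σ : (⦋n⦌ : SimplexCategory) ⟶ ⦋m⦌) (y : X _⦋m⦌),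
    Function.Surjective σ.toOrderHom → x = X.map σ.op y → n ≤ m

/-- A simplex is degenerate if it is the image of a  strictly lower-dimensional
simplex under a (surjective) degeneracy operator. -/
def IsDegenerate {X : SSet} {n : ℕ} (x : X _⦋n⦌) : Prop :=
  ∃ (m : ℕ) (σ : (⦋n⦌ : SimplexCategory) ⟶ ⦋m⦌) (y : X _⦋m⦌),
    m < n ∧ Function.Surjective σ.toOrderHom ∧ x = X.map σ.op y


/-- The bead of a necklace spanning two consecutive joints `j ≤ j'`. -/
def bead {N : ℕ} (J : Finset (Fin (N + 1))) (j j' : Fin (N + 1)) (hle : j ≤ j')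
    (hcons : ∀ t ∈ J, ¬ (j < t ∧ t < j')) :
    (Necklace N J) _⦋j'.val - j.val⦌ :=
  ⟨⟨fun k => ⟨j.val + k.val, by
        have hk := k.isLt
        simp only [Opposite.unop_op, SimplexCategory.len_mk] at hk
        have := j'.isLt; omega⟩,
      fun k k' h => by
        simp only [Fin.mk_le_mk]
        exact Nat.add_le_add_left h j.val⟩,
    by
      intro t ht h
      refine hcons t ht ⟨?_, ?_⟩
      · have h1 : j.val + 0 < t.val := h.1
        simp only [Fin.lt_def] at h1 ⊢
        omega
      · have h2 : t.val < j.val + (j'.val - j.val) := h.2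
        have hle' : j.val ≤ j'.val := hle
        simp only [Fin.lt_def] at h2 ⊢
        omega⟩

/-- A map from a necklace is totally nondegenerate if it sends each bead to a
nondegenerate simplex. -/
def TotallyNondeg {N : ℕ} {J : Finset (Fin (N + 1))} {S : SSet}
    (f : Necklace N J ⟶ S) : Prop :=
  ∀ (j j' : Fin (N + 1)), j ∈ J → j' ∈ J → ∀ (hlt : j < j')
    (hcons : ∀ t ∈ J, ¬ (j < t ∧ t < j')),
    IsNondeg (f.app _ (bead J j j' hlt.le hcons))

/-- A levelwise surjection of simplicial sets. -/
def LevelSurj {X Y : SSet} (f : X ⟶ Y) : Prop :=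
  ∀ m, Function.Surjective (f.app m)

/-- The category of necklaces over `S` with endpoints `a` and `b`. -/
structure NecOver (S : SSet) (a b : S _⦋0⦌) where
  N : ℕ
  J : Finset (Fin (N + 1))
  h0 : (0 : Fin (N + 1)) ∈ J
  hN : Fin.last N ∈ J
  f : Necklace N J ⟶ S
  ha : f.app _ (vtx J 0) = a
  hb : f.app _ (vtx J (Fin.last N)) = b

instance (S : SSet) (a b : S _⦋0⦌) : Category (NecOver S a b) where
  Hom t u := { g : Necklace t.N t.J ⟶ Necklace u.N u.J //
    g ≫ u.f = t.f ∧ g.app _ (vtx t.J 0) = vtx u.J 0 ∧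
    g.app _ (vtx t.J (Fin.last t.N)) = vtx u.J (Fin.last u.N) }
  id t := ⟨𝟙 _, Category.id_comp _, rfl, rfl⟩
  comp {t u v} g h := ⟨g.1 ≫ h.1, by rw [Category.assoc, h.2.1, g.2.1],
    by show h.1.app _ (g.1.app _ _) = _; rw [g.2.2.1, h.2.2.1],
    by show h.1.app _ (g.1.app _ _) = _; rw [g.2.2.2, h.2.2.2]⟩
  id_comp g := Subtype.ext (Category.id_comp _)
  comp_id g := Subtype.ext (Category.comp_id _)
  assoc f g h := Subtype.ext (Category.assoc _ _ _)


/-- Flagged necklaces over `S` with endpoints `a, b` and flags of length `n`. -/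
structure FlaggedNec (S : SSet) (a b : S _⦋0⦌) (n : ℕ) where
  N : ℕ
  J : Finset (Fin (N + 1))
  h0 : (0 : Fin (N + 1)) ∈ J
  hN : Fin.last N ∈ J
  f : Necklace N J ⟶ S
  ha : f.app _ (vtx J 0) = a
  hb : f.app _ (vtx J (Fin.last N)) = b
  flag : Fin (n + 1) → Finset (Fin (N + 1))
  flag_mono : Monotone flag
  flag_joints : J ⊆ flag 0

instance (S : SSet) (a b : S _⦋0⦌) (n : ℕ) : Category (FlaggedNec S a b n) where
  Hom t u := { g : Necklace t.N t.J ⟶ Necklace u.N u.J //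
    g ≫ u.f = t.f ∧ g.app _ (vtx t.J 0) = vtx u.J 0 ∧
    g.app _ (vtx t.J (Fin.last t.N)) = vtx u.J (Fin.last u.N) ∧
    ∀ i, (t.flag i).image (nvmap g) = u.flag i }
  id t := ⟨𝟙 _, Category.id_comp _, rfl, rfl, fun i => by
    have : nvmap (𝟙 (Necklace t.N t.J)) = id := rfl
    rw [this, Finset.image_id]⟩
  comp {t u v} g h := ⟨g.1 ≫ h.1, by rw [Category.assoc, h.2.1, g.2.1],
    by show h.1.app _ (g.1.app _ _) = _; rw [g.2.2.1, h.2.2.1],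
    by show h.1.app _ (g.1.app _ _) = _; rw [g.2.2.2.1, h.2.2.2.1],
    fun i => by
      rw [nvmap_comp, ← Finset.image_image, g.2.2.2.2 i, h.2.2.2.2 i]⟩
  id_comp g := Subtype.ext (Category.id_comp _)
  comp_id g := Subtype.ext (Category.comp_id _)
  assoc f g h := Subtype.ext (Category.assoc _ _ _)




/-- The vertex map induced by a map from a necklace into a product of simplices. -/
def Gfun {N : ℕ} {J : Finset (Fin (N + 1))} {m : ℕ} {n : Fin m → ℕ}
    (f : Necklace N J ⟶ Pstd m n) (i : Fin m) (v : Fin (N + 1)) : Fin (n i + 1) :=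
  (f.app (Opposite.op (⦋0⦌ : SimplexCategory)) (vtx J v) i) 0

lemma Gfun_apply {N : ℕ} {J : Finset (Fin (N + 1))} {m : ℕ} {n : Fin m → ℕ}
    (f : Necklace N J ⟶ Pstd m n) (k : SimplexCategoryᵒᵖ) (x : (Necklace N J).obj k)
    (i : Fin m) (j : Fin (k.unop.len + 1)) :
    Gfun f i (x.1 j) = (f.app k x i) j := by
  have h := ConcreteCategory.congr_hom (f.naturality (SimplexCategory.const (⦋0⦌ : SimplexCategory) k.unop j).op) x
  have hx : (Necklace N J).map (SimplexCategory.const (⦋0⦌ : SimplexCategory) k.unop j).op x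
      = vtx J (x.1 j) := eq_vtx _
  simp only [CategoryTheory.types_comp_apply] at h
  rw [hx] at h
  show (f.app (Opposite.op (⦋0⦌ : SimplexCategory)) (vtx J (x.1 j)) i) 0 = _
  rw [h]
  rfl

lemma Gfun_mono {N : ℕ} {J : Finset (Fin (N + 1))} {m : ℕ} {n : Fin m → ℕ}
    (f : Necklace N J ⟶ Pstd m n) (i : Fin m) : Monotone (Gfun f i) := by
  rw [Fin.monotone_iff_le_succ]
  intro v
  -- the edge from v.castSucc to v.succ
  have hlt1 : ∀ k : Fin 2, v.val + k.val < N + 1 := by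
    intro k; have := v.isLt; omega
  set e : (Necklace N J) _⦋1⦌ :=
    ⟨⟨fun k => ⟨v.val + k.val, hlt1 k⟩, fun a b hab => by
        simp only [Fin.mk_le_mk]; exact Nat.add_le_add_left hab _⟩,
      by
        intro t ht h
        have h1 : v.val < t.val := h.1
        have h2 : t.val < v.val + 1 := h.2
        omega⟩ with he
  have h0' : e.1 (0 : Fin 2) = v.castSucc := by
    apply Fin.ext; simp [he]; rfl
  have h1' : e.1 (1 : Fin 2) = v.succ := by
    apply Fin.ext; simp [he]; rfl
  have k0 := Gfun_apply f (Opposite.op (⦋1⦌ : SimplexCategory)) e i (0 : Fin 2)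
  have k1 := Gfun_apply f (Opposite.op (⦋1⦌ : SimplexCategory)) e i (1 : Fin 2)
  rw [h0'] at k0
  rw [h1'] at k1
  rw [k0, k1]
  exact (f.app _ e i).monotone (by decide : (0 : Fin 2) ≤ 1)

lemma Dfun_apply {N m : ℕ} {n : Fin m → ℕ} (J : Finset (Fin (N + 1)))
    (g : Δstd N ⟶ Pstd m n) (k : SimplexCategoryᵒᵖ) (φ : Fin (k.unop.len + 1) →o Fin (N + 1))
    (i : Fin m) (j : Fin (k.unop.len + 1)) :
    (g.app k φ i) j = (g.app (Opposite.op (⦋0⦌ : SimplexCategory))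
      ((neckIncl N J).app _ (vtx J (φ j))) i) 0 := by
  have h := ConcreteCategory.congr_hom (g.naturality (SimplexCategory.const (⦋0⦌ : SimplexCategory) k.unop j).op) φ
  change g.app _ ((Δstd N).map _ φ) = (Pstd m n).map _ (g.app _ φ) at h
  have hx : (Δstd N).map (SimplexCategory.const (⦋0⦌ : SimplexCategory) k.unop j).op φ
      = (neckIncl N J).app _ (vtx J (φ j)) := by
    refine OrderHom.ext _ _ (funext fun a => ?_)
    rfl
  rw [hx] at h
  rw [h]
  rfl

theorem stmt19 (N : ℕ) (J : Finset (Fin (N + 1)))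
    (h0 : (0 : Fin (N + 1)) ∈ J) (hN : Fin.last N ∈ J)
    (m : ℕ) (n : Fin m → ℕ) (f : Necklace N J ⟶ Pstd m n) :
    ∃! g : Δstd N ⟶ Pstd m n, neckIncl N J ≫ g = f := by
  refine ⟨{ app := fun k => TypeCat.ofHom fun φ => fun i => OrderHom.comp ⟨Gfun f i, Gfun_mono f i⟩ φ,
            naturality := fun k k' ψ => rfl }, ?_, ?_⟩
  · -- compatibility
    apply NatTrans.ext
    funext k; apply ConcreteCategory.hom_ext; intro x
    funext i
    refine OrderHom.ext _ _ (funext fun j => ?_)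
    exact Gfun_apply f k x i j
  · -- uniqueness
    intro g hg
    apply NatTrans.ext
    funext k; apply ConcreteCategory.hom_ext; intro φ
    funext i
    refine OrderHom.ext _ _ (funext fun j => ?_)
    have h1 := Dfun_apply J g k φ i j
    have h2 : ∀ y : (Necklace N J) _⦋0⦌,
        g.app (Opposite.op (⦋0⦌ : SimplexCategory)) ((neckIncl N J).app _ y) = f.app _ y :=
      fun y => ConcreteCategory.congr_hom (congrArg (fun h : Necklace N J ⟶ Pstd m n =>
        h.app (Opposite.op (⦋0⦌ : SimplexCategory))) hg) y
    rw [h1, h2]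
    rfl

end Paper
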